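/- Let E be a real Banach space, a < b real numbers and τ = b - a. If f : ℝ → E is three times continuously differentiable on [a,b], then ‖(f(b) - f(a))/τ - (1/2)(f'(b) + f'(a))‖ ≤ (τ/8) ∫_a^b ‖f'''(s)‖ ds. -/

import Mathlib

open Set intervalIntegral

/-- L¹-type bound for the Crank–Nicolson consistency error:
`‖(f(b) - f(a))/τ - (1/2)(f'(b) + f'(a))‖ ≤ (τ/8) ∫_a^b ‖f'''(s)‖ ds`. -/
theorem crank_nicolson_consistency_L1_bound
    {E : Type*} [NormedAddCommGroup E] [NormedSpace ℝ E] [CompleteSpace E]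
    (a b τ : ℝ) (hab : a < b) (hτ : τ = b - a)
    (f f' f'' f''' : ℝ → E)
    (hf : ∀ t ∈ Icc a b, HasDerivWithinAt f (f' t) (Icc a b) t)
    (hf' : ∀ t ∈ Icc a b, HasDerivWithinAt f' (f'' t) (Icc a b) t)
    (hf'' : ∀ t ∈ Icc a b, HasDerivWithinAt f'' (f''' t) (Icc a b) t)
    (hf''' : ContinuousOn f''' (Icc a b)) :
    ‖(1 / τ) • (f b - f a) - (1 / 2 : ℝ) • (f' b + f' a)‖
      ≤ (τ / 8) * ∫ s in a..b, ‖f''' s‖ := by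
  subst hτ
  have hτpos : (0:ℝ) < b - a := sub_pos.2 hab
  set k : ℝ → ℝ := fun s => (s - a) * (b - s) / 2 with hk
  have hkcont : Continuous k := by unfold k; continuity
  set H : ℝ → E := fun s => f s - k s • f'' s + ((a + b) / 2 - s) • f' s with hH
  have hcf : ContinuousOn f (Icc a b) := fun t ht => (hf t ht).continuousWithinAt
  have hcf' : ContinuousOn f' (Icc a b) := fun t ht => (hf' t ht).continuousWithinAt
  have hcf'' : ContinuousOn f'' (Icc a b) := fun t ht => (hf'' t ht).continuousWithinAt
  have hderiv : ∀ s ∈ Ioo a b, HasDerivAt H (-(k s) • f''' s) s := by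
    intro s hs
    have hmem : Icc a b ∈ nhds s := Icc_mem_nhds hs.1 hs.2
    have hsI : s ∈ Icc a b := Ioo_subset_Icc_self hs
    have h1 : HasDerivAt f (f' s) s := (hf s hsI).hasDerivAt hmem
    have h2 : HasDerivAt f' (f'' s) s := (hf' s hsI).hasDerivAt hmem
    have h3 : HasDerivAt f'' (f''' s) s := (hf'' s hsI).hasDerivAt hmem
    have hk' : HasDerivAt k ((a + b) / 2 - s) s := by
      have h := (((hasDerivAt_id s).sub_const a).mul
        ((hasDerivAt_const s b).sub (hasDerivAt_id s))).div_const 2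
      simp only [id_eq, Pi.mul_apply, Pi.sub_apply] at h
      refine h.congr_deriv ?_
      ring
    have hlin : HasDerivAt (fun s : ℝ => (a + b) / 2 - s) (-1) s := by
      exact ((hasDerivAt_id s).const_sub ((a+b)/2)).congr_deriv (by simp)
    have := (h1.sub (hk'.smul h3)).add (hlin.smul h2)
    refine this.congr_deriv ?_
    module
  have hcontH : ContinuousOn H (Icc a b) := by
    apply ContinuousOn.add
    · exact hcf.sub (hkcont.continuousOn.smul hcf'')
    · exact ((continuous_const.sub continuous_id).continuousOn).smul hcf'
  have hint : IntervalIntegrable (fun s => -(k s) • f''' s) MeasureTheory.volume a b := by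
    apply ContinuousOn.intervalIntegrable
    rw [uIcc_of_le hab.le]
    exact (hkcont.neg.continuousOn).smul hf'''
  have hFTC : ∫ s in a..b, -(k s) • f''' s = H b - H a :=
    integral_eq_sub_of_hasDeriv_right_of_le hab.le hcontH
      (fun s hs => (hderiv s hs).hasDerivWithinAt) hint
  have hHb : H b - H a = f b - f a - ((b - a) / 2) • (f' b + f' a) := by
    simp only [hH, hk]
    match_scalars <;> ring
  have key : (1 / (b - a)) • (f b - f a) - (1 / 2 : ℝ) • (f' b + f' a)
      = (1 / (b - a)) • ∫ s in a..b, -(k s) • f''' s := by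
    rw [hFTC, hHb]
    match_scalars <;> (field_simp; try ring)
  rw [key]
  have hnint : IntervalIntegrable (fun s => ‖-(k s) • f''' s‖) MeasureTheory.volume a b :=
    hint.norm
  have hnint2 : IntervalIntegrable (fun s => (b - a) ^ 2 / 8 * ‖f''' s‖)
      MeasureTheory.volume a b := by
    apply ContinuousOn.intervalIntegrable
    rw [uIcc_of_le hab.le]
    exact continuousOn_const.mul hf'''.norm
  have hle : ∀ s ∈ Icc a b, ‖-(k s) • f''' s‖ ≤ (b - a) ^ 2 / 8 * ‖f''' s‖ := by
    intro s hs
    rw [norm_smul, Real.norm_eq_abs]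
    apply mul_le_mul_of_nonneg_right _ (norm_nonneg _)
    have h1 : 0 ≤ s - a := sub_nonneg.2 hs.1
    have h2 : 0 ≤ b - s := sub_nonneg.2 hs.2
    have habs : |(-(k s))| = k s := by
      rw [abs_neg, abs_of_nonneg]
      positivity
    rw [habs]
    unfold k
    nlinarith [sq_nonneg ((s - a) - (b - s))]
  calc ‖(1 / (b - a)) • ∫ s in a..b, -(k s) • f''' s‖
      = (1 / (b - a)) * ‖∫ s in a..b, -(k s) • f''' s‖ := by
        rw [norm_smul, Real.norm_eq_abs, abs_of_pos (by positivity)]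
    _ ≤ (1 / (b - a)) * ∫ s in a..b, ‖-(k s) • f''' s‖ := by
        apply mul_le_mul_of_nonneg_left _ (by positivity)
        exact norm_integral_le_integral_norm hab.le
    _ ≤ (1 / (b - a)) * ∫ s in a..b, (b - a) ^ 2 / 8 * ‖f''' s‖ := by
        apply mul_le_mul_of_nonneg_left _ (by positivity)
        exact integral_mono_on hab.le hnint hnint2 hle
    _ = (b - a) / 8 * ∫ s in a..b, ‖f''' s‖ := by
        rw [integral_const_mul]
        field_simp
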